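/- Let ρ₋ > 0, 0 < α < 1, and u₋, u₊ real with u₊ < u₋; set A₀ = ρ₋^α·(u₋ − u₊) and, for A > A₀, ρ*(A) = (ρ₋^α·A/(A − A₀))^(1/α). Fix β real and t > 0, and define x₁(A, t) = ((ρ*(A)·u₊ − ρ₋·u₋)/(ρ*(A) − ρ₋))·t + (1/2)β·t² (the shock position) and x₂(t) = u₊·t + (1/2)β·t² (the contact discontinuity position). Then as A → A₀⁺: (i) ρ*(A) → +∞; (ii) the shock speed (ρ*(A)·u₊ − ρ₋·u₋)/(ρ*(A) − ρ₋) + β·t → u₊ + β·t; (iii) ρ*(A)·(x₂(t) − x₁(A, t)) → ρ₋·(u₋ − u₊)·t; and (iv) ρ*(A)·(u₊ + β·t)·(x₂(t) − x₁(A, t)) → ρ₋·(u₋ − u₊)·(u₊ + β·t)·t. -/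

import Mathlib

open Filter Topology

/-- Lemma 5.2: as `A → A₀⁺` the intermediate density blows up, the shock and
contact speeds coalesce to `u₊ + βt`, and the mass and momentum trapped between
the two waves converge to those of the limiting delta shock. -/
theorem stmt_18 (ρm α um up β t : ℝ) (hρm : 0 < ρm) (hα0 : 0 < α) (hα1 : α < 1)
    (h : up < um) (ht : 0 < t)
    (A₀ : ℝ) (hA₀ : A₀ = ρm ^ α * (um - up))
    (ρs : ℝ → ℝ) (hρs : ∀ A : ℝ, ρs A = ((ρm ^ α * A / (A - A₀)) ^ (1 / α) : ℝ))
    (x₁ : ℝ → ℝ)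
    (hx₁ : ∀ A : ℝ, x₁ A = (ρs A * up - ρm * um) / (ρs A - ρm) * t + (1 / 2) * β * t ^ 2)
    (x₂ : ℝ) (hx₂ : x₂ = up * t + (1 / 2) * β * t ^ 2) :
    Tendsto ρs (nhdsWithin A₀ (Set.Ioi A₀)) atTop ∧
    Tendsto (fun A : ℝ => (ρs A * up - ρm * um) / (ρs A - ρm) + β * t)
      (nhdsWithin A₀ (Set.Ioi A₀)) (nhds (up + β * t)) ∧
    Tendsto (fun A : ℝ => ρs A * (x₂ - x₁ A))
      (nhdsWithin A₀ (Set.Ioi A₀)) (nhds (ρm * (um - up) * t)) ∧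
    Tendsto (fun A : ℝ => ρs A * (up + β * t) * (x₂ - x₁ A))
      (nhdsWithin A₀ (Set.Ioi A₀)) (nhds (ρm * (um - up) * (up + β * t) * t)) := by
  have hrp : (0:ℝ) < ρm ^ α := Real.rpow_pos_of_pos hρm α
  have hA₀pos : 0 < A₀ := by rw [hA₀]; exact mul_pos hrp (by linarith)
  -- (i)
  have hinv : Tendsto (fun A : ℝ => (A - A₀)⁻¹) (nhdsWithin A₀ (Set.Ioi A₀)) atTop := by
    apply tendsto_inv_nhdsGT_zero.comp
    rw [tendsto_nhdsWithin_iff]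
    constructor
    · have : Tendsto (fun A : ℝ => A - A₀) (nhds A₀) (nhds (A₀ - A₀)) :=
        (continuous_id.sub continuous_const).tendsto A₀
      simpa using this.mono_left nhdsWithin_le_nhds
    · filter_upwards [self_mem_nhdsWithin] with A hA
      exact sub_pos.mpr (Set.mem_Ioi.mp hA)
  have hnum : Tendsto (fun A : ℝ => ρm ^ α * A) (nhdsWithin A₀ (Set.Ioi A₀))
      (nhds (ρm ^ α * A₀)) :=
    ((continuous_const.mul continuous_id).tendsto A₀).mono_left nhdsWithin_le_nhds
  have hbase : Tendsto (fun A : ℝ => ρm ^ α * A / (A - A₀)) (nhdsWithin A₀ (Set.Ioi A₀))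
      atTop := by
    simp only [div_eq_mul_inv]
    exact Filter.Tendsto.pos_mul_atTop (mul_pos hrp hA₀pos) hnum hinv
  have hρtop : Tendsto ρs (nhdsWithin A₀ (Set.Ioi A₀)) atTop := by
    have hpow : Tendsto (fun x : ℝ => x ^ (1/α:ℝ)) atTop atTop :=
      tendsto_rpow_atTop (by positivity)
    have := hpow.comp hbase
    apply this.congr
    intro A; simp only [Function.comp_apply, hρs]
  -- key limits in r as r → ∞
  have hev : ∀ᶠ r : ℝ in atTop, ρm < r := eventually_gt_atTop ρm
  have L1 : Tendsto (fun r : ℝ => (r * up - ρm * um) / (r - ρm)) atTop (nhds up) := by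
    have base : Tendsto (fun r : ℝ => up + ρm * (up - um) * (r - ρm)⁻¹) atTop
        (nhds (up + ρm * (up - um) * 0)) := by
      exact tendsto_const_nhds.add (tendsto_const_nhds.mul
        (tendsto_atTop_add_const_right _ (-ρm) tendsto_id).inv_tendsto_atTop)
    simp only [mul_zero, add_zero] at base
    apply base.congr'
    filter_upwards [hev] with r hr
    have hne : r - ρm ≠ 0 := by linarith
    field_simp
    ring
  have L2 : Tendsto (fun r : ℝ => r * (up - (r * up - ρm * um) / (r - ρm)))
      atTop (nhds (ρm * (um - up))) := by
    have base : Tendsto (fun r : ℝ => ρm * (um - up) * (1 + ρm * (r - ρm)⁻¹)) atTop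
        (nhds (ρm * (um - up) * (1 + ρm * 0))) := by
      exact tendsto_const_nhds.mul (tendsto_const_nhds.add (tendsto_const_nhds.mul
        (tendsto_atTop_add_const_right _ (-ρm) tendsto_id).inv_tendsto_atTop))
    simp only [mul_zero, add_zero, mul_one] at base
    apply base.congr'
    filter_upwards [hev] with r hr
    have hne : r - ρm ≠ 0 := by linarith
    field_simp
    ring
  refine ⟨hρtop, ?_, ?_, ?_⟩
  -- (ii)
  · have := (L1.comp hρtop).add_const (β * t)
    exact this
  -- (iii)
  · have key : Tendsto (fun A : ℝ => ρs A * (up - (ρs A * up - ρm * um) / (ρs A - ρm)))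
        (nhdsWithin A₀ (Set.Ioi A₀)) (nhds (ρm * (um - up))) := L2.comp hρtop
    have := key.mul_const t
    apply this.congr
    intro A
    rw [hx₁ A, hx₂]
    ring
  -- (iv)
  · have key : Tendsto (fun A : ℝ => ρs A * (up - (ρs A * up - ρm * um) / (ρs A - ρm)))
        (nhdsWithin A₀ (Set.Ioi A₀)) (nhds (ρm * (um - up))) := L2.comp hρtop
    have := key.mul_const ((up + β * t) * t)
    have h2 : ρm * (um - up) * ((up + β * t) * t) = ρm * (um - up) * (up + β * t) * t := by ring
    rw [h2] at this
    apply this.congr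
    intro A
    rw [hx₁ A, hx₂]
    ring
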